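/- Let π : X → [0,∞) be measurable with ∫ π dν = 1 and let α ∈ (0,1). For θ ∈ Θ define f(θ) = (1/(α−1)) · log ∫ π(x)^α q_θ(x)^{1−α} ν(dx) (finite by Hölder's inequality). Then the function θ ↦ A(θ) − f(θ) is convex on Θ; that is, f is 1-relatively smooth with respect to the log-partition function A. -/

import Mathlib

open MeasureTheory Real
open scoped RealInnerProductSpace

/-- For a probability density `p` and `α ∈ (0,1)`, the Rényi objective
`f θ = (1/(α-1)) log ∫ p^α q_θ^{1-α} dν` is 1-relatively smooth with respect to the
log-partition function `A`: the function `θ ↦ A θ - f θ` is convex on `Θ`. -/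
theorem statement5
    {X : Type*} [MeasurableSpace X] (ν : Measure X) [SigmaFinite ν] (hν : ν ≠ 0)
    {H : Type*} [NormedAddCommGroup H] [InnerProductSpace ℝ H] [FiniteDimensional ℝ H]
    [MeasurableSpace H] [BorelSpace H]
    (Γ : X → H) (hΓ : Measurable Γ)
    (Θ : Set H) (hΘ : Θ = {θ : H | Integrable (fun x => exp ⟪θ, Γ x⟫) ν})
    (A : H → ℝ) (hA : ∀ θ, A θ = log (∫ x, exp ⟪θ, Γ x⟫ ∂ν))
    (q : H → X → ℝ) (hq : ∀ θ x, q θ x = exp (⟪θ, Γ x⟫ - A θ))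
    (p : X → ℝ) (hpmeas : Measurable p) (hp0 : ∀ x, 0 ≤ p x)
    (hp1 : ∫ x, p x ∂ν = 1)
    (α : ℝ) (hα : α ∈ Set.Ioo (0:ℝ) 1)
    (f : H → ℝ)
    (hf : ∀ θ, f θ = (1/(α-1)) * log (∫ x, p x ^ α * q θ x ^ (1-α) ∂ν)) :
    ConvexOn ℝ Θ (fun θ => A θ - f θ) := by
  obtain ⟨hα0, hα1⟩ := hα
  have h1α : (0:ℝ) < 1 - α := by linarith
  -- the reduced integrand
  set g : H → X → ℝ := fun θ x => p x ^ α * exp ((1 - α) * ⟪θ, Γ x⟫) with hgdef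
  have hinner_meas : ∀ θ : H, Measurable fun x => ⟪θ, Γ x⟫ := fun θ =>
    measurable_const.inner hΓ
  have hg_meas : ∀ θ, Measurable (g θ) := fun θ =>
    (hpmeas.pow_const α).mul ((measurable_const.mul (hinner_meas θ)).exp)
  have hg_nonneg : ∀ θ x, 0 ≤ g θ x := fun θ x =>
    mul_nonneg (Real.rpow_nonneg (hp0 x) _) (Real.exp_pos _).le
  -- p is integrable
  have hp_int : Integrable p ν := by
    by_contra h
    rw [integral_undef h] at hp1
    norm_num at hp1
  -- integrability of g θ for θ ∈ Θ
  have hg_int : ∀ θ ∈ Θ, Integrable (g θ) ν := by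
    intro θ hθ
    rw [hΘ] at hθ
    have hbound : Integrable (fun x => α * p x + (1 - α) * exp ⟪θ, Γ x⟫) ν :=
      (hp_int.const_mul α).add (hθ.const_mul (1 - α))
    refine hbound.mono' ((hg_meas θ).aestronglyMeasurable) ?_
    filter_upwards with x
    rw [Real.norm_of_nonneg (hg_nonneg θ x)]
    have : g θ x = p x ^ α * exp ⟪θ, Γ x⟫ ^ (1 - α) := by
      simp only [hgdef]
      rw [mul_comm (1 - α) ⟪θ, Γ x⟫, Real.exp_mul]
    rw [this]
    exact Real.geom_mean_le_arith_mean2_weighted hα0.le h1α.le (hp0 x) (Real.exp_pos _).le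
      (by ring)
  -- positivity of ∫ g θ
  have hsupp : 0 < ν (Function.support p) := by
    by_contra h
    push_neg at h
    have h0 : ν (Function.support p) = 0 := le_antisymm (by simpa using h) zero_le
    have hae : p =ᵐ[ν] 0 := by
      rw [Filter.EventuallyEq, ae_iff]
      simpa [Function.support] using h0
    have := integral_congr_ae hae
    rw [hp1] at this
    simp at this
  have hg_pos : ∀ θ ∈ Θ, 0 < ∫ x, g θ x ∂ν := by
    intro θ hθ
    rw [integral_pos_iff_support_of_nonneg (fun x => hg_nonneg θ x) (hg_int θ hθ)]
    have : Function.support (g θ) = Function.support p := by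
      ext x
      simp only [Function.mem_support, hgdef]
      constructor
      · intro h hp
        apply h
        rw [hp, Real.zero_rpow hα0.ne', zero_mul]
      · intro h
        have hppos : 0 < p x := lt_of_le_of_ne (hp0 x) (Ne.symm h)
        positivity
    rwa [this]
  -- the key identity on Θ
  have key : ∀ θ ∈ Θ, A θ - f θ = (1 / (1 - α)) * log (∫ x, g θ x ∂ν) := by
    intro θ hθ
    have hI : ∫ x, p x ^ α * q θ x ^ (1 - α) ∂ν
        = exp (-(1 - α) * A θ) * ∫ x, g θ x ∂ν := by
      rw [← integral_const_mul]
      refine integral_congr_ae (Filter.Eventually.of_forall fun x => ?_)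
      simp only [hq, hgdef]
      rw [← Real.exp_mul]
      rw [show exp (-(1 - α) * A θ) * (p x ^ α * exp ((1 - α) * ⟪θ, Γ x⟫))
          = p x ^ α * (exp (-(1 - α) * A θ) * exp ((1 - α) * ⟪θ, Γ x⟫)) by ring]
      rw [← Real.exp_add]
      congr 1
      ring
    rw [hf, hI, Real.log_mul (Real.exp_ne_zero _) (hg_pos θ hθ).ne', Real.log_exp, hA]
    have hα1' : α - 1 ≠ 0 := by linarith
    field_simp
    ring
  -- convexity of Θ
  have hΘconv : Convex ℝ Θ := by
    rw [hΘ]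
    intro θ₁ h₁ θ₂ h₂ a b ha hb hab
    simp only [Set.mem_setOf_eq] at h₁ h₂ ⊢
    have hbound : Integrable (fun x => a * exp ⟪θ₁, Γ x⟫ + b * exp ⟪θ₂, Γ x⟫) ν :=
      (h₁.const_mul a).add (h₂.const_mul b)
    refine hbound.mono' ((Real.measurable_exp.comp (hinner_meas _)).aestronglyMeasurable) ?_
    filter_upwards with x
    rw [Real.norm_of_nonneg (Real.exp_pos _).le]
    have : ⟪a • θ₁ + b • θ₂, Γ x⟫ = a * ⟪θ₁, Γ x⟫ + b * ⟪θ₂, Γ x⟫ := by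
      rw [inner_add_left, real_inner_smul_left, real_inner_smul_left]
    rw [this, Real.exp_add, mul_comm a, mul_comm b, Real.exp_mul, Real.exp_mul]
    exact Real.geom_mean_le_arith_mean2_weighted ha hb (Real.exp_pos _).le (Real.exp_pos _).le hab
  -- main convexity
  refine ⟨hΘconv, ?_⟩
  intro θ₁ h₁ θ₂ h₂ a b ha hb hab
  have hmid : a • θ₁ + b • θ₂ ∈ Θ := hΘconv h₁ h₂ ha hb hab
  simp only []
  rw [key _ h₁, key _ h₂, key _ hmid]
  rcases eq_or_lt_of_le ha with ha0 | ha0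
  · have hb1 : b = 1 := by linarith
    rw [← ha0, hb1]; simp
  rcases eq_or_lt_of_le hb with hb0 | hb0
  · have ha1 : a = 1 := by linarith
    rw [← hb0, ha1]; simp
  -- Hölder step
  have ha1 : a < 1 := by linarith
  have hconj : Real.HolderConjugate (1/a) (1/b) := by
    exact Real.holderConjugate_one_div ha0 hb0 hab
  have hgi1 := hg_int θ₁ h₁
  have hgi2 := hg_int θ₂ h₂
  have hmemF : ∀ (θ : H) (c : ℝ), 0 < c → Integrable (g θ) ν →
      MemLp (fun x => g θ x ^ c) (ENNReal.ofReal (1/c)) ν := by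
    intro θ c hc hint
    refine ⟨((hg_meas θ).pow_const c).aestronglyMeasurable, ?_⟩
    have heq : (fun x => g θ x ^ c) = fun x => ‖g θ x‖ ^ c := by
      funext x; rw [Real.norm_of_nonneg (hg_nonneg θ x)]
    rw [heq, eLpNorm_norm_rpow _ hc]
    have : ENNReal.ofReal (1/c) * ENNReal.ofReal c = 1 := by
      rw [← ENNReal.ofReal_mul (by positivity), one_div, inv_mul_cancel₀ hc.ne']
      simp
    rw [this]
    exact ENNReal.rpow_lt_top_of_nonneg hc.le (memLp_one_iff_integrable.mpr hint).eLpNorm_ne_top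
  have holder : ∫ x, g (a • θ₁ + b • θ₂) x ∂ν
      ≤ (∫ x, g θ₁ x ∂ν) ^ a * (∫ x, g θ₂ x ∂ν) ^ b := by
    have hpoint : ∀ x, g (a • θ₁ + b • θ₂) x = g θ₁ x ^ a * g θ₂ x ^ b := by
      intro x
      simp only [hgdef]
      have hinner : ⟪a • θ₁ + b • θ₂, Γ x⟫ = a * ⟪θ₁, Γ x⟫ + b * ⟪θ₂, Γ x⟫ := by
        rw [inner_add_left, real_inner_smul_left, real_inner_smul_left]
      rw [hinner,
        Real.mul_rpow (Real.rpow_nonneg (hp0 x) _) (Real.exp_pos _).le,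
        Real.mul_rpow (Real.rpow_nonneg (hp0 x) _) (Real.exp_pos _).le,
        ← Real.rpow_mul (hp0 x), ← Real.rpow_mul (hp0 x),
        ← Real.exp_mul, ← Real.exp_mul]
      rw [show p x ^ (α * a) * rexp ((1 - α) * ⟪θ₁, Γ x⟫ * a)
            * (p x ^ (α * b) * rexp ((1 - α) * ⟪θ₂, Γ x⟫ * b))
          = (p x ^ (α * a) * p x ^ (α * b))
            * (rexp ((1 - α) * ⟪θ₁, Γ x⟫ * a) * rexp ((1 - α) * ⟪θ₂, Γ x⟫ * b)) by ring,
        ← Real.rpow_add' (hp0 x)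
          (by rw [← mul_add, hab, mul_one]; exact hα0.ne' : α * a + α * b ≠ 0),
        ← mul_add, hab, mul_one, ← Real.exp_add]
      congr 1
      ring
    have heq1 : ∀ x, (g θ₁ x ^ a) ^ (1/a) = g θ₁ x := fun x => by
      rw [← Real.rpow_mul (hg_nonneg θ₁ x), mul_one_div_cancel ha0.ne', Real.rpow_one]
    have heq2 : ∀ x, (g θ₂ x ^ b) ^ (1/b) = g θ₂ x := fun x => by
      rw [← Real.rpow_mul (hg_nonneg θ₂ x), mul_one_div_cancel hb0.ne', Real.rpow_one]
    have h1 := integral_mul_le_Lp_mul_Lq_of_nonneg hconj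
      (Filter.Eventually.of_forall fun x => Real.rpow_nonneg (hg_nonneg θ₁ x) a)
      (Filter.Eventually.of_forall fun x => Real.rpow_nonneg (hg_nonneg θ₂ x) b)
      (hmemF θ₁ a ha0 hgi1) (hmemF θ₂ b hb0 hgi2)
    simp only [heq1, heq2, one_div_one_div] at h1
    calc ∫ x, g (a • θ₁ + b • θ₂) x ∂ν
        = ∫ x, g θ₁ x ^ a * g θ₂ x ^ b ∂ν :=
          integral_congr_ae (Filter.Eventually.of_forall fun x => hpoint x)
      _ ≤ (∫ x, g θ₁ x ∂ν) ^ a * (∫ x, g θ₂ x ∂ν) ^ b := h1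
  have hlog : log (∫ x, g (a • θ₁ + b • θ₂) x ∂ν)
      ≤ a * log (∫ x, g θ₁ x ∂ν) + b * log (∫ x, g θ₂ x ∂ν) := by
    calc log (∫ x, g (a • θ₁ + b • θ₂) x ∂ν)
        ≤ log ((∫ x, g θ₁ x ∂ν) ^ a * (∫ x, g θ₂ x ∂ν) ^ b) :=
          Real.log_le_log (hg_pos _ hmid) holder
      _ = a * log (∫ x, g θ₁ x ∂ν) + b * log (∫ x, g θ₂ x ∂ν) := by
          rw [Real.log_mul (Real.rpow_pos_of_pos (hg_pos _ h₁) a).ne'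
              (Real.rpow_pos_of_pos (hg_pos _ h₂) b).ne',
            Real.log_rpow (hg_pos _ h₁), Real.log_rpow (hg_pos _ h₂)]
  have hc : (0:ℝ) ≤ 1 / (1 - α) := by positivity
  calc (1 / (1 - α)) * log (∫ x, g (a • θ₁ + b • θ₂) x ∂ν)
      ≤ (1 / (1 - α)) * (a * log (∫ x, g θ₁ x ∂ν) + b * log (∫ x, g θ₂ x ∂ν)) :=
        mul_le_mul_of_nonneg_left hlog hc
    _ = a • ((1 / (1 - α)) * log (∫ x, g θ₁ x ∂ν))
        + b • ((1 / (1 - α)) * log (∫ x, g θ₂ x ∂ν)) := by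
        simp only [smul_eq_mul]; ring
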